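/- The exponential kernel admits the Gaussian random-feature decomposition: for a, b ∈ ℝ^d, exp(a^T b) = E_{ω ~ N(0, I_d)}[ φ_ω(a) conj(φ_ω(b)) ] where φ_ω(u) = exp(−i ω^T u) exp(‖u‖²/2); equivalently, exp(‖a‖²/2 + ‖b‖²/2) E_{ω}[exp(−i ω^T (a − b))] = exp(‖a‖²/2 + ‖b‖²/2) exp(−‖a−b‖²/2) = exp(a^T b). -/

import Mathlib

open MeasureTheory Matrix ProbabilityTheory Complex
open scoped ENNReal NNReal Real

lemma charGauss (t : ℝ) :
    ∫ x : ℝ, Complex.exp (-Complex.I * ((t * x : ℝ) : ℂ)) ∂(gaussianReal 0 1) =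
      ((Real.exp (-(t ^ 2) / 2) : ℝ) : ℂ) := by
  rw [gaussianReal_of_var_ne_zero 0 one_ne_zero]
  have hmeas : Measurable fun x : ℝ => (gaussianPDFReal 0 1 x).toNNReal :=
    (measurable_gaussianPDFReal 0 1).real_toNNReal
  have hwd : gaussianPDF 0 1 = fun x => ((gaussianPDFReal 0 1 x).toNNReal : ℝ≥0∞) := rfl
  rw [hwd, integral_withDensity_eq_integral_smul hmeas]
  have hpdf : ∀ x : ℝ, ((gaussianPDFReal 0 1 x).toNNReal : ℝ) = gaussianPDFReal 0 1 x :=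
    fun x => Real.coe_toNNReal _ (gaussianPDFReal_nonneg 0 1 x)
  have h1 : ∀ x : ℝ, (gaussianPDFReal 0 1 x).toNNReal • Complex.exp (-Complex.I * ((t * x : ℝ) : ℂ))
      = ((Real.sqrt (2 * Real.pi))⁻¹ : ℂ) *
        Complex.exp ((-(1/2) : ℂ) * (x:ℂ) ^ 2 + (-Complex.I * t) * (x:ℂ) + 0) := by
    intro x
    rw [NNReal.smul_def, hpdf, gaussianPDFReal]
    push_cast
    rw [Complex.real_smul]
    push_cast
    rw [mul_one, mul_assoc, ← Complex.exp_add]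
    congr 2
    ring
  simp_rw [h1]
  rw [integral_const_mul, integral_cexp_quadratic (by norm_num) (-Complex.I * t) 0]
  have h2 : ((Real.pi : ℂ) / -(-(1/2) : ℂ)) = ((2 * Real.pi : ℝ) : ℂ) := by push_cast; ring
  rw [h2]
  have h3 : ((2 * Real.pi : ℝ) : ℂ) ^ ((1:ℂ)/2) = ((Real.sqrt (2 * Real.pi) : ℝ) : ℂ) := by
    rw [Real.sqrt_eq_rpow, Complex.ofReal_cpow (by positivity)]
    norm_num
  rw [h3]
  have h4 : (0 : ℂ) - (-Complex.I * t) ^ 2 / (4 * (-(1/2) : ℂ)) = ((-(t ^ 2) / 2 : ℝ) : ℂ) := by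
    have : (Complex.I) ^ 2 = -1 := Complex.I_sq
    push_cast
    field_simp
    ring_nf
    rw [Complex.I_sq]
    ring
  rw [h4, Complex.ofReal_exp]
  have h6 : ((Real.sqrt (2 * Real.pi) : ℝ) : ℂ) ≠ 0 := by
    norm_cast
    positivity
  exact inv_mul_cancel_left₀ h6 _

lemma piGauss (d : ℕ) (v : Fin d → ℝ) :
    ∫ ω : Fin d → ℝ, Complex.exp (-Complex.I * ((ω ⬝ᵥ v : ℝ) : ℂ))
        ∂(Measure.pi fun _ : Fin d => gaussianReal 0 1)
      = ((Real.exp (-(∑ i, v i ^ 2) / 2) : ℝ) : ℂ) := by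
  letI : MeasureSpace ℝ := ⟨gaussianReal 0 1⟩
  haveI : SigmaFinite (volume : Measure ℝ) := inferInstanceAs (SigmaFinite (gaussianReal 0 1))
  have hsplit : ∀ ω : Fin d → ℝ, Complex.exp (-Complex.I * ((ω ⬝ᵥ v : ℝ) : ℂ))
      = ∏ i, Complex.exp (-Complex.I * ((v i * ω i : ℝ) : ℂ)) := by
    intro ω
    rw [← Complex.exp_sum]
    congr 1
    simp only [dotProduct]
    push_cast
    rw [Finset.mul_sum]
    exact Finset.sum_congr rfl fun i _ => by ring
  simp_rw [hsplit]
  have hpi : (Measure.pi fun _ : Fin d => gaussianReal 0 1) = (volume : Measure (Fin d → ℝ)) := rfl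
  rw [hpi]
  erw [MeasureTheory.integral_fintype_prod_eq_prod (ι := Fin d)
    (fun i (x : ℝ) => Complex.exp (-Complex.I * ((v i * x : ℝ) : ℂ))) (μ := fun _ => volume)]
  have : ∀ i, (∫ x : ℝ, Complex.exp (-Complex.I * ((v i * x : ℝ) : ℂ)))
      = ((Real.exp (-(v i ^ 2) / 2) : ℝ) : ℂ) := fun i => charGauss (v i)
  simp_rw [this, ← Complex.ofReal_prod, ← Real.exp_sum]
  norm_num
  congr 1
  simp [Finset.sum_div, neg_div]

theorem stmt12
    (d : ℕ) (a b : Fin d → ℝ) :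
    ((Real.exp (a ⬝ᵥ b) : ℂ) =
      ∫ ω : Fin d → ℝ,
        (Complex.exp (-Complex.I * ((ω ⬝ᵥ a : ℝ) : ℂ)) *
            Complex.exp ((((∑ i, a i ^ 2) : ℝ) : ℂ) / 2)) *
          (starRingEnd ℂ)
            (Complex.exp (-Complex.I * ((ω ⬝ᵥ b : ℝ) : ℂ)) *
              Complex.exp ((((∑ i, b i ^ 2) : ℝ) : ℂ) / 2))
        ∂(Measure.pi fun _ : Fin d => gaussianReal 0 1)) ∧
    ((Real.exp ((∑ i, a i ^ 2) / 2 + (∑ i, b i ^ 2) / 2) : ℂ) *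
        ∫ ω : Fin d → ℝ,
          Complex.exp (-Complex.I * ((ω ⬝ᵥ (a - b) : ℝ) : ℂ))
        ∂(Measure.pi fun _ : Fin d => gaussianReal 0 1) =
      (Real.exp ((∑ i, a i ^ 2) / 2 + (∑ i, b i ^ 2) / 2) : ℂ) *
        (Real.exp (-(∑ i, (a i - b i) ^ 2) / 2) : ℂ)) ∧
    (Real.exp ((∑ i, a i ^ 2) / 2 + (∑ i, b i ^ 2) / 2) *
        Real.exp (-(∑ i, (a i - b i) ^ 2) / 2) = Real.exp (a ⬝ᵥ b)) := by
  have hsum : ∑ i, (a i - b i) ^ 2 = (∑ i, a i ^ 2) + (∑ i, b i ^ 2) - 2 * (a ⬝ᵥ b) := by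
    simp only [dotProduct, Finset.mul_sum, ← Finset.sum_add_distrib, ← Finset.sum_sub_distrib]
    exact Finset.sum_congr rfl fun i _ => by ring
  have part3 : Real.exp ((∑ i, a i ^ 2) / 2 + (∑ i, b i ^ 2) / 2) *
      Real.exp (-(∑ i, (a i - b i) ^ 2) / 2) = Real.exp (a ⬝ᵥ b) := by
    rw [← Real.exp_add, hsum]
    congr 1
    ring
  have hpig := piGauss d (a - b)
  have hab : ∀ i : Fin d, (a - b) i ^ 2 = (a i - b i) ^ 2 := fun i => by simp
  simp_rw [hab] at hpig
  refine ⟨?_, ?_, part3⟩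
  · have key : ∀ ω : Fin d → ℝ,
        (Complex.exp (-Complex.I * ((ω ⬝ᵥ a : ℝ) : ℂ)) *
            Complex.exp ((((∑ i, a i ^ 2) : ℝ) : ℂ) / 2)) *
          (starRingEnd ℂ)
            (Complex.exp (-Complex.I * ((ω ⬝ᵥ b : ℝ) : ℂ)) *
              Complex.exp ((((∑ i, b i ^ 2) : ℝ) : ℂ) / 2))
        = ((Real.exp ((∑ i, a i ^ 2) / 2 + (∑ i, b i ^ 2) / 2) : ℝ) : ℂ) *
            Complex.exp (-Complex.I * ((ω ⬝ᵥ (a - b) : ℝ) : ℂ)) := by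
      intro ω
      rw [_root_.map_mul, ← Complex.exp_conj, ← Complex.exp_conj, Complex.ofReal_exp,
        ← Complex.exp_add, ← Complex.exp_add, ← Complex.exp_add]
      simp only [_root_.map_mul, map_neg, Complex.conj_I, Complex.conj_ofReal, map_div₀,
        map_ofNat]
      rw [dotProduct_sub]
      push_cast
      ring_nf
      rw [← Complex.exp_add]
      ring_nf
    simp_rw [key]
    rw [integral_const_mul, hpig, ← Complex.ofReal_mul, part3]
  · rw [hpig]
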